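/- Let X ≥ 0 and C > 0 be random variables, q > 0, ν > 0 with νq > 1, and suppose there exists δ > 1 with δ/ν < q and E[X (X/C)^{δ/ν}] < ∞. Define h(a) = a^ν and ρ(u) = min{u^q, 1}. Then for every sequence (a_n) of positive reals with a_n → 0, lim_{n→∞} E[X ρ(X h(a_n)/C)] / a_n = 0. -/

import Mathlib

open MeasureTheory Filter

/-- Case 3 of Theorem 4.4 (resilience estimate when `νq > 1` and the moment
`E[X (X/C)^{δ/ν}]` is finite for some `δ ∈ (1, qν)`):
`E[X ρ(X h(a_n)/C)]/a_n → 0`. -/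
theorem stmt12 {Ω : Type*} [MeasurableSpace Ω] (μ : Measure Ω) [IsProbabilityMeasure μ]
    (X C : Ω → ℝ) (hXm : Measurable X) (hCm : Measurable C)
    (hX : ∀ ω, 0 ≤ X ω) (hC : ∀ ω, 0 < C ω)
    (hXint : Integrable X μ)
    (q ν δ : ℝ) (hq : 0 < q) (hν : 0 < ν) (hνq : 1 < ν * q)
    (hδ : 1 < δ) (hδν : δ / ν < q)
    (hmom : Integrable (fun ω => X ω * (X ω / C ω) ^ (δ / ν)) μ)
    (a : ℕ → ℝ) (ha : ∀ n, 0 < a n) (halim : Tendsto a atTop (nhds 0)) :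
    Tendsto (fun n =>
        (∫ ω, X ω * min ((X ω * a n ^ ν / C ω) ^ q) 1 ∂μ) / a n) atTop (nhds 0) := by
  set M := ∫ ω, X ω * (X ω / C ω) ^ (δ / ν) ∂μ with hMdef
  have hp : 0 < δ / ν := div_pos (by linarith) hν
  -- integrability of the integrand for each n
  have hintn : ∀ n, Integrable (fun ω => X ω * min ((X ω * a n ^ ν / C ω) ^ q) 1) μ := by
    intro n
    apply hXint.mono'
    · exact (by fun_prop : Measurable fun ω => X ω * min ((X ω * a n ^ ν / C ω) ^ q) 1).aestronglyMeasurable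
    · filter_upwards with ω
      have h0 : 0 ≤ (X ω * a n ^ ν / C ω) ^ q :=
        Real.rpow_nonneg (div_nonneg (mul_nonneg (hX ω) (Real.rpow_nonneg (ha n).le ν)) (hC ω).le) q
      have h1 : min ((X ω * a n ^ ν / C ω) ^ q) 1 ≤ 1 := min_le_right _ _
      rw [Real.norm_eq_abs, abs_of_nonneg (mul_nonneg (hX ω) (le_min h0 zero_le_one))]
      calc X ω * min ((X ω * a n ^ ν / C ω) ^ q) 1 ≤ X ω * 1 :=
            mul_le_mul_of_nonneg_left h1 (hX ω)
        _ = X ω := mul_one _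
  -- pointwise bound
  have hbound : ∀ n ω, X ω * min ((X ω * a n ^ ν / C ω) ^ q) 1
      ≤ a n ^ δ * (X ω * (X ω / C ω) ^ (δ / ν)) := by
    intro n ω
    set u := X ω * a n ^ ν / C ω with hu
    have hu0 : 0 ≤ u := div_nonneg (mul_nonneg (hX ω) (Real.rpow_nonneg (ha n).le ν)) (hC ω).le
    have hmin : min (u ^ q) 1 ≤ u ^ (δ / ν) := by
      rcases eq_or_lt_of_le hu0 with h0 | h0
      · rw [← h0, Real.zero_rpow hq.ne', Real.zero_rpow hp.ne']
        simp
      · rcases le_total u 1 with h1 | h1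
        · calc min (u ^ q) 1 ≤ u ^ q := min_le_left _ _
            _ ≤ u ^ (δ / ν) := Real.rpow_le_rpow_of_exponent_ge h0 h1 hδν.le
        · calc min (u ^ q) 1 ≤ 1 := min_le_right _ _
            _ = u ^ (0 : ℝ) := (Real.rpow_zero u).symm
            _ ≤ u ^ (δ / ν) := Real.rpow_le_rpow_of_exponent_le h1 hp.le
    have huval : u ^ (δ / ν) = a n ^ δ * (X ω / C ω) ^ (δ / ν) := by
      have : u = (X ω / C ω) * a n ^ ν := by rw [hu]; ring
      rw [this, Real.mul_rpow (div_nonneg (hX ω) (hC ω).le) (Real.rpow_nonneg (ha n).le ν),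
        ← Real.rpow_mul (ha n).le]
      · rw [show ν * (δ / ν) = δ by field_simp]
        ring
    calc X ω * min (u ^ q) 1 ≤ X ω * u ^ (δ / ν) := mul_le_mul_of_nonneg_left hmin (hX ω)
      _ = a n ^ δ * (X ω * (X ω / C ω) ^ (δ / ν)) := by rw [huval]; ring
  -- the key estimate
  have key : ∀ n, (∫ ω, X ω * min ((X ω * a n ^ ν / C ω) ^ q) 1 ∂μ) / a n
      ≤ a n ^ (δ - 1) * M := by
    intro n
    have hint : (∫ ω, X ω * min ((X ω * a n ^ ν / C ω) ^ q) 1 ∂μ)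
        ≤ ∫ ω, a n ^ δ * (X ω * (X ω / C ω) ^ (δ / ν)) ∂μ :=
      integral_mono (hintn n) (hmom.const_mul _) (hbound n)
    rw [integral_const_mul] at hint
    have hdiv : (∫ ω, X ω * min ((X ω * a n ^ ν / C ω) ^ q) 1 ∂μ) / a n
        ≤ (a n ^ δ * M) / a n := by
      exact div_le_div_of_nonneg_right hint (ha n).le |>.trans_eq rfl
    refine hdiv.trans_eq ?_
    rw [show a n ^ (δ - 1) = a n ^ δ / a n by rw [Real.rpow_sub (ha n), Real.rpow_one]]
    ring
  -- nonnegativity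
  have hnn : ∀ n, 0 ≤ (∫ ω, X ω * min ((X ω * a n ^ ν / C ω) ^ q) 1 ∂μ) / a n := by
    intro n
    refine div_nonneg (integral_nonneg fun ω => ?_) (ha n).le
    have h0 : 0 ≤ (X ω * a n ^ ν / C ω) ^ q :=
      Real.rpow_nonneg (div_nonneg (mul_nonneg (hX ω) (Real.rpow_nonneg (ha n).le ν)) (hC ω).le) q
    exact mul_nonneg (hX ω) (le_min h0 zero_le_one)
  -- the bounding sequence tends to 0
  have hlim : Tendsto (fun n => a n ^ (δ - 1) * M) atTop (nhds 0) := by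
    have h1 : Tendsto (fun n => a n ^ (δ - 1)) atTop (nhds 0) := by
      have hc : ContinuousAt (fun x : ℝ => x ^ (δ - 1)) 0 :=
        Real.continuousAt_rpow_const 0 (δ - 1) (Or.inr (by linarith))
      have := hc.tendsto.comp halim
      simpa [Function.comp_def, Real.zero_rpow (show δ - 1 ≠ 0 by linarith)] using this
    simpa using h1.mul_const M
  exact squeeze_zero hnn key hlim
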